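/- If d_n is a supermultiplicative positive sequence (d_{m+n} ≥ d_m d_n) with growth rate μ = lim d_n^{1/n}, and t_0 > 0 is such that Σ_{n=1}^N v_n t_0^n ≥ 1 where v_n are defined by the relation Σ d_n t^n = 1/(1 - Σ v_n t^n) (as formal power series) and all v_n ≥ 0, then μ ≥ 1/t_0. -/

import Mathlib

open Filter

/-- The lower-bound method: if d is a supermultiplicative positive sequence with
growth rate μ = lim d_n^{1/n}, d_0 = 1, and the nonnegative sequence v defined by
D = 1/(1-V) (i.e. d_n = Σ_{k=1}^n v_k d_{n-k} for n ≥ 1) satisfies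
Σ_{n=1}^N v_n t₀ⁿ ≥ 1 for some t₀ > 0, then μ ≥ 1/t₀. -/
theorem growth_lower_bound (d v : ℕ → ℝ) (N : ℕ) (t0 μ : ℝ)
    (hd0 : d 0 = 1) (hdpos : ∀ n, 0 < d n)
    (hsup : ∀ m n : ℕ, d m * d n ≤ d (m + n))
    (hμ : Tendsto (fun n : ℕ => d n ^ ((n : ℝ)⁻¹)) atTop (nhds μ))
    (hv : ∀ n, 0 ≤ v n)
    (hrel : ∀ n : ℕ, 1 ≤ n → d n = ∑ k ∈ Finset.Icc 1 n, v k * d (n - k))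
    (ht0 : 0 < t0)
    (hVN : 1 ≤ ∑ k ∈ Finset.Icc 1 N, v k * t0 ^ k) :
    1 / t0 ≤ μ := by
  -- Step 1: d n ≤ μ ^ n for all n
  have hdle : ∀ n : ℕ, d n ≤ μ ^ n := by
    intro n
    rcases Nat.eq_zero_or_pos n with hn | hn
    · simp [hn, hd0]
    have hpow : ∀ k : ℕ, d n ^ k ≤ d (k * n) := by
      intro k
      induction k with
      | zero => simp [hd0]
      | succ k ih =>
        calc d n ^ (k + 1) = d n ^ k * d n := pow_succ _ _
          _ ≤ d (k * n) * d n := mul_le_mul_of_nonneg_right ih (hdpos n).le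
          _ ≤ d (k * n + n) := hsup _ _
          _ = d ((k + 1) * n) := by ring_nf
    have hroot : d n ^ ((n : ℝ)⁻¹) ≤ μ := by
      have hsub : Tendsto (fun k : ℕ => d (k * n) ^ (((k * n : ℕ) : ℝ))⁻¹)
          atTop (nhds μ) := by
        exact hμ.comp (tendsto_atTop_mono
          (fun k => Nat.le_mul_of_pos_right k hn) tendsto_id)
      refine ge_of_tendsto hsub ?_
      filter_upwards [eventually_ge_atTop 1] with k hk
      have h1 : (d n ^ k) ^ (((k * n : ℕ) : ℝ))⁻¹ ≤ d (k * n) ^ (((k * n : ℕ) : ℝ))⁻¹ :=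
        Real.rpow_le_rpow (pow_nonneg (hdpos n).le k) (hpow k) (by positivity)
      refine le_trans (le_of_eq ?_) h1
      rw [← Real.rpow_natCast (d n) k, ← Real.rpow_mul (hdpos n).le]
      congr 1
      have hk0 : (k : ℝ) ≠ 0 := Nat.cast_ne_zero.mpr (by omega)
      have hn0 : (n : ℝ) ≠ 0 := Nat.cast_ne_zero.mpr (by omega)
      push_cast
      field_simp
    have hn0 : (n : ℝ) ≠ 0 := Nat.cast_ne_zero.mpr (by omega)
    calc d n = (d n ^ ((n : ℝ)⁻¹)) ^ (n : ℕ) := by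
          rw [← Real.rpow_natCast (d n ^ ((n : ℝ)⁻¹)) n, ← Real.rpow_mul (hdpos n).le,
            inv_mul_cancel₀ hn0, Real.rpow_one]
      _ ≤ μ ^ n := pow_le_pow_left₀ (Real.rpow_nonneg (hdpos n).le _) hroot n
  have hμpos : 0 < μ := lt_of_lt_of_le (hdpos 1) (by simpa using hdle 1)
  -- N must be positive
  have hN : 0 < N := by
    rcases Nat.eq_zero_or_pos N with h | h
    · simp [h] at hVN; linarith
    · exact h
  by_contra hcon
  push_neg at hcon
  have hc1 : μ * t0 < 1 := by
    have := (lt_div_iff₀ ht0).mp hcon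
    linarith
  have hc0 : 0 < μ * t0 := mul_pos hμpos ht0
  set S : ℕ → ℝ := fun M => ∑ n ∈ Finset.Icc 0 M, d n * t0 ^ n with hS
  have hSsplit : ∀ M : ℕ, S M = 1 + ∑ n ∈ Finset.Icc 1 M, d n * t0 ^ n := by
    intro M
    have he : Finset.Icc 0 M = insert 0 (Finset.Icc 1 M) := by
      ext x; simp; omega
    rw [hS]; simp only []
    rw [he, Finset.sum_insert (by simp), hd0]
    simp
  have hSnonneg : ∀ M, 0 ≤ S M := by
    intro M
    apply Finset.sum_nonneg
    intro i _
    exact mul_nonneg (hdpos i).le (by positivity)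
  have hSbound : ∀ M : ℕ, S M ≤ 1 / (1 - μ * t0) := by
    intro M
    have h1 : S M ≤ ∑ n ∈ Finset.Icc 0 M, (μ * t0) ^ n := by
      apply Finset.sum_le_sum
      intro i _
      calc d i * t0 ^ i ≤ μ ^ i * t0 ^ i :=
            mul_le_mul_of_nonneg_right (hdle i) (by positivity)
        _ = (μ * t0) ^ i := (mul_pow _ _ _).symm
    have he : Finset.Icc 0 M = Finset.range (M + 1) := by
      ext x; simp
    rw [he] at h1
    rw [geom_sum_eq (by linarith : μ * t0 ≠ 1)] at h1
    have heq : ((μ * t0) ^ (M + 1) - 1) / (μ * t0 - 1)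
        = (1 - (μ * t0) ^ (M + 1)) / (1 - μ * t0) := by
      rw [div_eq_div_iff (by linarith) (by linarith)]
      ring
    rw [heq] at h1
    have hx : (0:ℝ) ≤ (μ * t0) ^ (M + 1) := by positivity
    have h2 : (1 - (μ * t0) ^ (M + 1)) / (1 - μ * t0) ≤ 1 / (1 - μ * t0) := by
      gcongr
      · linarith
    linarith
  -- key inequality
  have hkey : ∀ M : ℕ, N ≤ M →
      (∑ k ∈ Finset.Icc 1 N, v k * t0 ^ k) * S (M - N) ≤
        ∑ n ∈ Finset.Icc 1 M, d n * t0 ^ n := by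
    intro M hNM
    have hsum : ∀ n ∈ Finset.Icc 1 M,
        d n * t0 ^ n = ∑ k ∈ Finset.Icc 1 n, v k * d (n - k) * t0 ^ n := by
      intro n hn
      rw [hrel n (Finset.mem_Icc.mp hn).1, Finset.sum_mul]
    rw [Finset.sum_congr rfl hsum, Finset.sum_sigma']
    rw [hS]; simp only []
    rw [Finset.sum_mul_sum, ← Finset.sum_product']
    set g : ℕ × ℕ → (Σ _ : ℕ, ℕ) := fun p => ⟨p.1 + p.2, p.1⟩ with hg
    set f : (Σ _ : ℕ, ℕ) → ℝ := fun q => v q.2 * d (q.1 - q.2) * t0 ^ q.1 with hf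
    have hinj : Set.InjOn g ((Finset.Icc 1 N ×ˢ Finset.Icc 0 (M - N)) : Finset (ℕ × ℕ)) := by
      intro p _ q _ hpq
      simp only [hg, Sigma.mk.inj_iff, heq_eq_eq] at hpq
      obtain ⟨h1, h2⟩ := hpq
      ext <;> omega
    have himg : ∑ p ∈ Finset.Icc 1 N ×ˢ Finset.Icc 0 (M - N),
        v p.1 * t0 ^ p.1 * (d p.2 * t0 ^ p.2) =
        ∑ q ∈ (Finset.Icc 1 N ×ˢ Finset.Icc 0 (M - N)).image g, f q := by
      rw [Finset.sum_image
        (fun p hp q hq h => hinj hp hq h)]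
      apply Finset.sum_congr rfl
      intro p hp
      simp only [hf, hg, Nat.add_sub_cancel_left]
      rw [pow_add]
      ring
    rw [himg]
    apply Finset.sum_le_sum_of_subset_of_nonneg
    · intro q hq
      simp only [Finset.mem_image] at hq
      obtain ⟨p, hp, rfl⟩ := hq
      simp only [Finset.mem_product, Finset.mem_Icc] at hp
      simp only [Finset.mem_sigma, Finset.mem_Icc, hg]
      omega
    · intro q _ _
      simp only [hf]
      exact mul_nonneg (mul_nonneg (hv q.2) (hdpos _).le) (by positivity)
  -- recursion: S at m*N is at least m+1
  have hrec : ∀ m : ℕ, ∀ M : ℕ, m * N ≤ M → (m : ℝ) + 1 ≤ S M := by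
    intro m
    induction m with
    | zero =>
      intro M _
      rw [hSsplit M]
      push_cast
      have : (0:ℝ) ≤ ∑ n ∈ Finset.Icc 1 M, d n * t0 ^ n := by
        apply Finset.sum_nonneg
        intro i _
        exact mul_nonneg (hdpos i).le (by positivity)
      linarith
    | succ m ih =>
      intro M hM
      rw [Nat.succ_mul] at hM
      have hNM : N ≤ M := by omega
      have h1 := hkey M hNM
      have h2 : (m : ℝ) + 1 ≤ S (M - N) := ih (M - N) (by omega)
      have h3 : S (M - N) ≤ (∑ k ∈ Finset.Icc 1 N, v k * t0 ^ k) * S (M - N) := by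
        nlinarith [hSnonneg (M - N)]
      rw [hSsplit M]
      push_cast
      linarith
  -- contradiction
  obtain ⟨m, hm⟩ := exists_nat_gt (1 / (1 - μ * t0))
  have := hrec m (m * N) le_rfl
  have := hSbound (m * N)
  linarith
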